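/- Let N ≥ 1 and take couplings J_n = n·(N−n) for 1 ≤ n ≤ N−1, with h the single-excitation Hamiltonian of the corresponding field-free Heisenberg chain of length N. Then exp(−i·π·h) equals the identity matrix; i.e., the chain exhibits a perfect revival at time t_0 = π with phase 0. -/

import Mathlib

/-- The single-excitation Hamiltonian of the field-free Heisenberg chain of length `N`
with couplings `J 1, …, J (N-1)` (and the convention `J 0 = J N = 0`). -/
def heisHam (N : ℕ) (J : ℕ → ℝ) : Matrix (Fin N) (Fin N) ℝ :=
  Matrix.of fun i j =>
    if (i : ℕ) + 1 = (j : ℕ) then J ((i : ℕ) + 1)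
    else if (j : ℕ) + 1 = (i : ℕ) then J ((j : ℕ) + 1)
    else if i = j then -(J (i : ℕ) + J ((i : ℕ) + 1))
    else 0

open Polynomial

noncomputable section HahnAux

/-- `x (N - x)` as a complex polynomial. -/
def hq1 (N : ℕ) : ℂ[X] := C (N:ℂ) * X - X^2
/-- `(x+1)(N-1-x)` as a complex polynomial. -/
def hq2 (N : ℕ) : ℂ[X] := C ((N:ℂ)-1) + C ((N:ℂ)-2) * X - X^2

/-- The image of `X^j` under the hypergeometric-type difference operator. -/
def hT (N j : ℕ) : ℂ[X] :=
  hq1 N * ((X - 1)^j - X^j) + hq2 N * ((X + 1)^j - X^j)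

lemma coeff_pow_sub (c : ℂ) (j k : ℕ) :
    (((X + C c)^j - X^j).coeff k) = c^(j-k) * (j.choose k) - if j = k then 1 else 0 := by
  rw [coeff_sub, coeff_X_add_C_pow, coeff_X_pow]
  congr 1
  simp [eq_comm]

lemma coeff_pow_sub_self (c : ℂ) (j : ℕ) : (((X + C c)^j - X^j).coeff j) = 0 := by
  simp [coeff_pow_sub, coeff_X_add_C_pow]

lemma coeff_pow_sub_gt (c : ℂ) {j k : ℕ} (h : j < k) : (((X + C c)^j - X^j).coeff k) = 0 := by
  rw [coeff_pow_sub, Nat.choose_eq_zero_of_lt h, if_neg (by omega)]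
  simp

lemma coeff_pow_sub_pred (c : ℂ) (m : ℕ) :
    (((X + C c)^(m+2) - X^(m+2)).coeff (m+1)) = c * (m+2) := by
  rw [coeff_pow_sub, if_neg (by omega), Nat.choose_succ_self_right]
  rw [show m + 2 - (m+1) = 1 by omega]
  push_cast
  ring

lemma coeff_pow_sub_pred2 (c : ℂ) (m : ℕ) :
    (((X + C c)^(m+2) - X^(m+2)).coeff m) = c^2 * ((m+2).choose m) := by
  rw [coeff_pow_sub, if_neg (by omega), show m + 2 - m = 2 by omega, sub_zero]

lemma natDegree_pow_sub_le (c : ℂ) (j : ℕ) :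
    ((X + C c)^j - X^j).natDegree ≤ j - 1 := by
  rw [natDegree_le_iff_coeff_eq_zero]
  intro k hk
  rcases eq_or_lt_of_le (show j ≤ k by omega) with h | h
  · subst h; exact coeff_pow_sub_self c j
  · exact coeff_pow_sub_gt c h

lemma sub_one_eq (j : ℕ) : ((X:ℂ[X]) - 1)^j - X^j = (X + C (-1))^j - X^j := by
  rw [map_neg, C_1, ← sub_eq_add_neg]
lemma add_one_eq (j : ℕ) : ((X:ℂ[X]) + 1)^j - X^j = (X + C 1)^j - X^j := by rw [C_1]

lemma coeff_quad_mul (a b e : ℂ) (p : ℂ[X]) (k : ℕ) :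
    ((C a + C b * X + C e * X^2) * p).coeff (k+2)
      = a * p.coeff (k+2) + b * p.coeff (k+1) + e * p.coeff k := by
  have : (C a + C b * X + C e * X^2) * p
      = C a * p + C b * (p * X) + C e * (p * X^2) := by ring
  rw [this, coeff_add, coeff_add, coeff_C_mul, coeff_C_mul, coeff_C_mul,
    show k + 2 = (k+1) + 1 from rfl, coeff_mul_X, coeff_mul_X_pow]

lemma hq1_eq (N : ℕ) : hq1 N = C 0 + C (N:ℂ) * X + C (-1) * X^2 := by
  unfold hq1; simp only [map_neg, map_zero, C_1]; ring

lemma hq2_eq (N : ℕ) : hq2 N = C ((N:ℂ)-1) + C ((N:ℂ)-2) * X + C (-1) * X^2 := by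
  unfold hq2; simp only [map_neg, C_1]; ring

lemma coeff_hT (N : ℕ) (j k : ℕ) :
    (hT N j).coeff (k+2)
      = ((N:ℂ) * (((X - 1)^j - X^j : ℂ[X]).coeff (k+1))
          - (((X - 1)^j - X^j : ℂ[X]).coeff k))
        + (((N:ℂ)-1) * (((X + 1)^j - X^j : ℂ[X]).coeff (k+2))
          + ((N:ℂ)-2) * (((X + 1)^j - X^j : ℂ[X]).coeff (k+1))
          - (((X + 1)^j - X^j : ℂ[X]).coeff k)) := by
  unfold hT
  rw [hq1_eq, hq2_eq, coeff_add, coeff_quad_mul, coeff_quad_mul]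
  ring


lemma hT_zero (N : ℕ) : hT N 0 = 0 := by simp [hT]

lemma hT_one (N : ℕ) : hT N 1 = C ((N:ℂ)-1) - C 2 * X := by
  unfold hT hq1 hq2
  simp only [pow_one, map_sub, map_add, map_one, map_ofNat]
  ring

lemma choose_aux (m : ℕ) : (m+2).choose m * 2 = (m+2)*(m+1) := by
  have h := Nat.choose_symm (show 2 ≤ m+2 by omega)
  rw [show (m+2)-2 = m by omega] at h
  rw [h, Nat.choose_two_right, show (m+2)-1 = m+1 by omega, Nat.div_mul_cancel]
  have := Nat.even_mul_succ_self (m+1)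
  rw [show (m+1) * (m+1+1) = (m+2) * (m+1) by ring] at this
  exact this.two_dvd

lemma natDegree_hT_le_succ (N m : ℕ) : (hT N (m+2)).natDegree ≤ m+3 := by
  unfold hT
  have h1 : (hq1 N).natDegree ≤ 2 := by rw [hq1_eq]; compute_degree
  have h2 : (hq2 N).natDegree ≤ 2 := by rw [hq2_eq]; compute_degree
  have h3 : (((X:ℂ[X]) - 1)^(m+2) - X^(m+2)).natDegree ≤ m+1 := by
    rw [sub_one_eq]; exact le_trans (natDegree_pow_sub_le _ _) (by omega)
  have h4 : (((X:ℂ[X]) + 1)^(m+2) - X^(m+2)).natDegree ≤ m+1 := by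
    rw [add_one_eq]; exact le_trans (natDegree_pow_sub_le _ _) (by omega)
  exact natDegree_add_le_of_degree_le
    (le_trans (natDegree_mul_le_of_le h1 h3) (by omega))
    (le_trans (natDegree_mul_le_of_le h2 h4) (by omega))

lemma coeff_hT_top (N m : ℕ) : (hT N (m+2)).coeff (m+3) = 0 := by
  rw [show m+3 = (m+1)+2 from rfl, coeff_hT, sub_one_eq, add_one_eq,
    coeff_pow_sub_self, coeff_pow_sub_pred, coeff_pow_sub_pred,
    coeff_pow_sub_gt _ (by omega), coeff_pow_sub_self]
  ring

lemma natDegree_hT_le (N j : ℕ) : (hT N j).natDegree ≤ j := by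
  match j with
  | 0 => simp [hT_zero]
  | 1 => rw [hT_one]; compute_degree
  | (m+2) =>
    rw [natDegree_le_iff_coeff_eq_zero]
    intro k hk
    rcases eq_or_lt_of_le (show m+3 ≤ k by omega) with h | h
    · rw [← h]; exact coeff_hT_top N m
    · exact coeff_eq_zero_of_natDegree_lt (lt_of_le_of_lt (natDegree_hT_le_succ N m) h)

lemma coeff_hT_diag (N j : ℕ) : (hT N j).coeff j = -(j * (j+1) : ℂ) := by
  match j with
  | 0 => simp [hT_zero]
  | 1 =>
    rw [hT_one, coeff_sub, coeff_C_mul, coeff_C, coeff_X_one]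
    norm_num
  | (m+2) =>
    rw [coeff_hT, sub_one_eq, add_one_eq,
      coeff_pow_sub_pred, coeff_pow_sub_pred2, coeff_pow_sub_self,
      coeff_pow_sub_pred, coeff_pow_sub_pred2]
    have hc : ((m+2).choose m : ℂ) * 2 = ((m:ℂ)+2) * ((m:ℂ)+1) := by
      have := congrArg (Nat.cast : ℕ → ℂ) (choose_aux m)
      push_cast at this
      linear_combination this
    push_cast
    linear_combination -hc



def Jc (N n : ℕ) : ℂ := (n:ℂ) * ((N:ℂ) - (n:ℂ))

def hC (N : ℕ) : Matrix (Fin N) (Fin N) ℂ :=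
  (heisHam N (fun n => (n : ℝ) * ((N : ℝ) - (n : ℝ)))).map Complex.ofReal

lemma hC_apply (N : ℕ) (i k : Fin N) :
    hC N i k = if (i:ℕ)+1 = (k:ℕ) then Jc N ((i:ℕ)+1)
      else if (k:ℕ)+1 = (i:ℕ) then Jc N ((k:ℕ)+1)
      else if i = k then -(Jc N i + Jc N ((i:ℕ)+1)) else 0 := by
  simp only [hC, Matrix.map_apply, heisHam, Matrix.of_apply]
  split_ifs <;> simp [Jc] <;> push_cast <;> ring

lemma sum_ite_coord (N t : ℕ) (g : ℕ → ℂ) :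
    ∑ k : Fin N, (if t = (k:ℕ) then g (k:ℕ) else 0) = if t < N then g t else 0 := by
  split_ifs with h
  · have he : ∀ k : Fin N, (t = (k:ℕ)) ↔ ((⟨t, h⟩ : Fin N) = k) := by
      intro k; rw [Fin.ext_iff]
    simp_rw [he]
    rw [Finset.sum_ite_eq Finset.univ (⟨t, h⟩ : Fin N) (fun k => g (k:ℕ)),
      if_pos (Finset.mem_univ _)]
  · apply Finset.sum_eq_zero
    intro k _
    rw [if_neg]
    have := k.2
    omega

lemma Jc_self (N : ℕ) : Jc N N = 0 := by simp [Jc]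
lemma Jc_zero (N : ℕ) : Jc N 0 = 0 := by simp [Jc]

lemma key_sum (N j : ℕ) (x : Fin N) :
    ∑ k : Fin N, hC N x k * ((k:ℕ):ℂ)^j = (hT N j).eval ((x:ℕ):ℂ) := by
  have hx : (x:ℕ) < N := x.2
  have hsplit : ∀ k : Fin N, hC N x k * ((k:ℕ):ℂ)^j
      = (if (x:ℕ)+1 = (k:ℕ) then Jc N ((x:ℕ)+1) * ((k:ℕ):ℂ)^j else 0)
        + ((if (k:ℕ) = (x:ℕ)-1 ∧ 1 ≤ (x:ℕ) then Jc N ((k:ℕ)+1) * ((k:ℕ):ℂ)^j else 0)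
        + (if (x:ℕ) = (k:ℕ) then -(Jc N x + Jc N ((x:ℕ)+1)) * ((k:ℕ):ℂ)^j else 0)) := by
    intro k
    rw [hC_apply]
    have hek : (x = k) ↔ ((x:ℕ) = (k:ℕ)) := Fin.ext_iff
    simp only [hek]
    split_ifs <;> first | ring1 | (exfalso; omega)
  rw [Finset.sum_congr rfl (fun k _ => hsplit k), Finset.sum_add_distrib,
    Finset.sum_add_distrib]
  have e1 : ∑ k : Fin N, (if (x:ℕ)+1 = (k:ℕ) then Jc N ((x:ℕ)+1) * ((k:ℕ):ℂ)^j else 0)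
      = Jc N ((x:ℕ)+1) * (((x:ℕ):ℂ)+1)^j := by
    rw [sum_ite_coord N ((x:ℕ)+1) (fun n => Jc N ((x:ℕ)+1) * ((n:ℕ):ℂ)^j)]
    split_ifs with h
    · push_cast; ring
    · have hxN : (x:ℕ)+1 = N := by omega
      rw [hxN, Jc_self, zero_mul]
  have e2 : ∑ k : Fin N, (if (k:ℕ) = (x:ℕ)-1 ∧ 1 ≤ (x:ℕ) then Jc N ((k:ℕ)+1) * ((k:ℕ):ℂ)^j else 0)
      = Jc N (x:ℕ) * (((x:ℕ):ℂ)-1)^j := by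
    rcases Nat.eq_zero_or_pos (x:ℕ) with h0 | h0
    · rw [h0, Jc_zero, zero_mul]
      apply Finset.sum_eq_zero
      intro k _
      rw [if_neg (by omega)]
    · have hc : ∀ k : Fin N, (((k:ℕ) = (x:ℕ)-1 ∧ 1 ≤ (x:ℕ))) = ((x:ℕ)-1 = (k:ℕ)) := by
        intro k
        apply propext
        constructor
        · intro hh; omega
        · intro hh; omega
      simp_rw [hc]
      rw [sum_ite_coord N ((x:ℕ)-1) (fun n => Jc N (n+1) * ((n:ℕ):ℂ)^j),
        if_pos (by omega), show (x:ℕ)-1+1 = (x:ℕ) by omega]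
      congr 1
      rw [Nat.cast_sub h0, Nat.cast_one]
  have e3 : ∑ k : Fin N, (if (x:ℕ) = (k:ℕ) then -(Jc N x + Jc N ((x:ℕ)+1)) * ((k:ℕ):ℂ)^j else 0)
      = -(Jc N x + Jc N ((x:ℕ)+1)) * (((x:ℕ):ℂ))^j := by
    rw [sum_ite_coord N (x:ℕ) (fun n => -(Jc N x + Jc N ((x:ℕ)+1)) * ((n:ℕ):ℂ)^j),
      if_pos x.2]
  rw [e1, e2, e3]
  unfold hT hq1 hq2 Jc
  simp only [eval_add, eval_mul, eval_sub, eval_pow, eval_C, eval_X, eval_one]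
  push_cast
  ring


def Tm (N : ℕ) : Matrix (Fin N) (Fin N) ℂ := Matrix.of fun i j => (hT N (j:ℕ)).coeff (i:ℕ)

def Vm (N : ℕ) : Matrix (Fin N) (Fin N) ℂ := Matrix.vandermonde (fun i => ((i:ℕ):ℂ))

lemma hC_mul_Vm (N : ℕ) : hC N * Vm N = Vm N * Tm N := by
  ext x j
  rw [Matrix.mul_apply, Matrix.mul_apply]
  have hdeg : (hT N (j:ℕ)).natDegree < N := lt_of_le_of_lt (natDegree_hT_le N j) j.2
  calc ∑ k, hC N x k * Vm N k j
      = ∑ k, hC N x k * ((k:ℕ):ℂ)^(j:ℕ) := rfl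
    _ = (hT N (j:ℕ)).eval ((x:ℕ):ℂ) := key_sum N j x
    _ = ∑ i ∈ Finset.range N, (hT N (j:ℕ)).coeff i * ((x:ℕ):ℂ)^i :=
        eval_eq_sum_range' hdeg _
    _ = ∑ i : Fin N, (hT N (j:ℕ)).coeff (i:ℕ) * ((x:ℕ):ℂ)^(i:ℕ) :=
        (Fin.sum_univ_eq_sum_range (fun i => (hT N (j:ℕ)).coeff i * ((x:ℕ):ℂ)^i) N).symm
    _ = ∑ i : Fin N, Vm N x i * Tm N i j := by
        apply Finset.sum_congr rfl
        intro i _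
        rw [Vm, Tm, Matrix.vandermonde_apply, Matrix.of_apply, mul_comm]

lemma det_Vm_ne_zero (N : ℕ) : (Vm N).det ≠ 0 := by
  rw [Vm, Matrix.det_vandermonde]
  apply Finset.prod_ne_zero_iff.mpr
  intro i _
  apply Finset.prod_ne_zero_iff.mpr
  intro k hk
  have hik : i < k := Finset.mem_Ioi.mp hk
  have : (i:ℕ) < (k:ℕ) := hik
  intro hc
  rw [sub_eq_zero, Nat.cast_inj] at hc
  omega

lemma charpoly_conj_aux {n : Type*} [Fintype n] [DecidableEq n]
    (A B V : Matrix n n ℂ) (hV : V.det ≠ 0) (h : A * V = V * B) :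
    A.charpoly = B.charpoly := by
  have hmat : A.charmatrix * V.map C = V.map C * B.charmatrix := by
    rw [Matrix.charmatrix, Matrix.charmatrix, sub_mul, mul_sub]
    congr 1
    · exact (Matrix.scalar_commute (X : ℂ[X]) (fun r' => Commute.all _ _) (V.map C)).eq
    · simp only [RingHom.mapMatrix_apply]
      rw [← Matrix.map_mul, ← Matrix.map_mul, h]
  have hdet := congrArg Matrix.det hmat
  rw [Matrix.det_mul, Matrix.det_mul] at hdet
  have hC0 : (V.map C).det ≠ 0 := by
    have hc : (V.map C).det = C V.det := by
      rw [RingHom.map_det, RingHom.mapMatrix_apply]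
    rw [hc]
    simpa using hV
  rw [Matrix.charpoly, Matrix.charpoly]
  rw [mul_comm] at hdet
  exact mul_left_cancel₀ hC0 hdet

lemma blockTriangular_Tm (N : ℕ) : (Tm N).BlockTriangular id := by
  intro i j hji
  exact coeff_eq_zero_of_natDegree_lt (lt_of_le_of_lt (natDegree_hT_le N j) hji)

lemma charpoly_hC (N : ℕ) :
    (hC N).charpoly = ∏ i : Fin N, (X + C (((i:ℕ):ℂ) * ((i:ℕ)+1))) := by
  rw [charpoly_conj_aux (hC N) (Tm N) (Vm N) (det_Vm_ne_zero N) (hC_mul_Vm N),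
    Matrix.charpoly_of_upperTriangular _ (blockTriangular_Tm N)]
  apply Finset.prod_congr rfl
  intro i _
  rw [Tm, Matrix.of_apply, coeff_hT_diag, map_neg, sub_neg_eq_add]


lemma isHermitian_hC (N : ℕ) : (hC N).IsHermitian := by
  rw [Matrix.IsHermitian]
  ext i j
  rw [Matrix.conjTranspose_apply, hC_apply, hC_apply]
  simp only [Fin.ext_iff]
  split_ifs <;> (try (exfalso; omega)) <;> (try (simp [Jc])) <;>
    (rename_i h; rw [h]; try simp [Jc])

lemma exp_neg_smul_hC (N : ℕ) :
    NormedSpace.exp ((-(Complex.I * (Real.pi : ℂ))) • hC N) = 1 := by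
  classical
  set c : ℂ := -(Complex.I * (Real.pi : ℂ)) with hc
  have hH : (hC N).IsHermitian := isHermitian_hC N
  set Umat : Matrix (Fin N) (Fin N) ℂ := (hH.eigenvectorUnitary : Matrix (Fin N) (Fin N) ℂ)
    with hUmat
  set μ : Fin N → ℝ := hH.eigenvalues with hμ
  have hUu : IsUnit Umat := ⟨Unitary.toUnits hH.eigenvectorUnitary, rfl⟩
  have hUdet : IsUnit Umat.det := (Matrix.isUnit_iff_isUnit_det Umat).mp hUu
  have hUst : star Umat * Umat = 1 := by
    have := hH.eigenvectorUnitary.prop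
    rw [Matrix.mem_unitaryGroup_iff'] at this
    exact this
  have hUinv : Umat⁻¹ = star Umat := Matrix.inv_eq_left_inv hUst
  have hspec : hC N = Umat * Matrix.diagonal (Complex.ofReal ∘ μ) * star Umat :=
    hH.spectral_theorem
  have hAU : hC N * Umat = Umat * Matrix.diagonal (Complex.ofReal ∘ μ) := by
    rw [hspec, mul_assoc (Umat * Matrix.diagonal (Complex.ofReal ∘ μ)) (star Umat) Umat,
      hUst, mul_one]
  have hcp2 : (hC N).charpoly = ∏ i : Fin N, (X - C (Complex.ofReal (μ i))) := by
    rw [charpoly_conj_aux (hC N) (Matrix.diagonal (Complex.ofReal ∘ μ)) Umat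
      hUdet.ne_zero hAU]
    rw [Matrix.charpoly_of_upperTriangular _ (fun i j h => Matrix.diagonal_apply_ne _
      (fun hij => by rw [hij] at h; exact lt_irrefl _ h))]
    apply Finset.prod_congr rfl
    intro i _
    rw [Matrix.diagonal_apply_eq]
    rfl
  have key : ∀ k : Fin N, ∃ i : Fin N,
      Complex.ofReal (μ k) = -(((i:ℕ):ℂ) * (((i:ℕ):ℂ)+1)) := by
    intro k
    have h1 : eval (Complex.ofReal (μ k)) (∏ i : Fin N, (X - C (Complex.ofReal (μ i)))) = 0 := by
      rw [eval_prod]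
      exact Finset.prod_eq_zero (Finset.mem_univ k) (by simp)
    rw [← hcp2, charpoly_hC, eval_prod] at h1
    obtain ⟨i, _, hi⟩ := Finset.prod_eq_zero_iff.mp h1
    refine ⟨i, ?_⟩
    simp only [eval_add, eval_X, eval_C] at hi
    linear_combination hi
  have hsm : c • hC N = Umat * (c • Matrix.diagonal (Complex.ofReal ∘ μ)) * Umat⁻¹ := by
    rw [hUinv, hspec, Matrix.mul_smul, Matrix.smul_mul]
  rw [hsm, Matrix.exp_conj Umat _ hUu]
  have hdiag : c • Matrix.diagonal (Complex.ofReal ∘ μ)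
      = Matrix.diagonal (fun i => c * Complex.ofReal (μ i)) := by
    rw [← Matrix.diagonal_smul]
    congr 1
  rw [hdiag, Matrix.exp_diagonal, Pi.exp_def]
  have hone : ∀ i, NormedSpace.exp (c * Complex.ofReal (μ i)) = 1 := by
    intro i
    obtain ⟨t, ht⟩ := key i
    obtain ⟨m, hm⟩ := Nat.even_mul_succ_self (t:ℕ)
    have hmc : ((t:ℕ):ℂ) * (((t:ℕ):ℂ)+1) = (m:ℂ) + (m:ℂ) := by
      have := congrArg (Nat.cast : ℕ → ℂ) hm
      push_cast at this
      linear_combination this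
    have harg : c * Complex.ofReal (μ i) = (m:ℤ) * (2*(Real.pi:ℂ)*Complex.I) := by
      rw [ht, hmc, hc]
      push_cast
      ring
    rw [harg, ← Complex.exp_eq_exp_ℂ, Complex.exp_int_mul_two_pi_mul_I]
  have : (fun i => NormedSpace.exp (c * Complex.ofReal (μ i))) = fun _ => (1:ℂ) :=
    funext hone
  rw [this, Matrix.diagonal_one, mul_one, Matrix.mul_nonsing_inv Umat hUdet]

end HahnAux

/-- The field-free Heisenberg chain with couplings `J_n = n (N - n)` exhibits a perfect
revival at time `π` with phase `0`: `exp(-iπh) = 1`. -/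
theorem hahn_chain_perfect_revival (N : ℕ) (hN : 1 ≤ N) :
    NormedSpace.exp
        ((-(Complex.I * (Real.pi : ℂ))) •
          (heisHam N (fun n => (n : ℝ) * ((N : ℝ) - (n : ℝ)))).map Complex.ofReal)
      = (1 : Matrix (Fin N) (Fin N) ℂ) :=
  exp_neg_smul_hC N
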